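/- Let M = (E, I) be a matroid on a finite ground set and let A, B ∈ I be independent sets. Let A_1, …, A_n be subsets of A such that each element of A appears in exactly q of them (q a positive integer). Then there exist sets B_1, …, B_n ⊆ B such that each element of B appears in at most q of them and, for each i, A_i ∪ (B ∖ B_i) ∈ I. -/

import Mathlib

/-- A matroid on a finite ground set, given by its family of independent sets
(as a predicate on `Finset`s): the family is nonempty (contains `∅`),
downward closed, and satisfies the exchange axiom. -/
structure FinMatroid (E : Type*) [DecidableEq E] [Fintype E] where
  Indep : Finset E → Prop
  empty_indep : Indep ∅
  indep_subset : ∀ ⦃A B : Finset E⦄, Indep B → A ⊆ B → Indep A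
  indep_exchange : ∀ ⦃A B : Finset E⦄, Indep A → Indep B → A.card < B.card →
    ∃ x ∈ B \ A, Indep (insert x A)

namespace FinMatroid

open Finset

variable {X : Type*} [DecidableEq X] [Fintype X] (M : FinMatroid X)

open Classical in
noncomputable def rk (S : Finset X) : ℕ :=
  (S.powerset.filter fun T => M.Indep T).sup Finset.card

open Classical in
lemma le_rk {T S : Finset X} (hT : M.Indep T) (hTS : T ⊆ S) : T.card ≤ M.rk S := by
  classical
  refine Finset.le_sup (f := Finset.card) ?_
  simp only [Finset.mem_filter, Finset.mem_powerset]
  exact ⟨hTS, hT⟩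

lemma exists_basis (S : Finset X) : ∃ T, T ⊆ S ∧ M.Indep T ∧ T.card = M.rk S := by
  classical
  have hne : (S.powerset.filter fun T => M.Indep T).Nonempty :=
    ⟨∅, by simp [M.empty_indep]⟩
  obtain ⟨T, hT, hT2⟩ := Finset.exists_mem_eq_sup _ hne Finset.card
  simp only [Finset.mem_filter, Finset.mem_powerset] at hT
  exact ⟨T, hT.1, hT.2, by rw [rk, hT2]⟩

lemma rk_le_card (S : Finset X) : M.rk S ≤ S.card := by
  classical
  refine Finset.sup_le fun T hT => ?_
  simp only [Finset.mem_filter, Finset.mem_powerset] at hT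
  exact Finset.card_le_card hT.1

lemma rk_mono {S T : Finset X} (h : S ⊆ T) : M.rk S ≤ M.rk T := by
  obtain ⟨U, hU1, hU2, hU3⟩ := M.exists_basis S
  rw [← hU3]; exact M.le_rk hU2 (hU1.trans h)

lemma rk_of_indep {S : Finset X} (h : M.Indep S) : M.rk S = S.card :=
  le_antisymm (M.rk_le_card S) (M.le_rk h (subset_refl S))

lemma indep_of_rk_eq_card {S : Finset X} (h : M.rk S = S.card) : M.Indep S := by
  obtain ⟨T, hT1, hT2, hT3⟩ := M.exists_basis S
  have : T = S := Finset.eq_of_subset_of_card_le hT1 (by omega)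
  rwa [← this]

lemma rk_le_rk_insert (x : X) (S : Finset X) : M.rk S ≤ M.rk (insert x S) :=
  M.rk_mono (Finset.subset_insert x S)

lemma rk_insert_le (x : X) (S : Finset X) : M.rk (insert x S) ≤ M.rk S + 1 := by
  obtain ⟨T, hT1, hT2, hT3⟩ := M.exists_basis (insert x S)
  have h1 : T.erase x ⊆ S := by
    intro y hy
    have := Finset.mem_of_mem_erase hy
    have hne := Finset.ne_of_mem_erase hy
    rcases Finset.mem_insert.1 (hT1 this) with h | h
    · exact absurd h hne
    · exact h
  have h2 : M.Indep (T.erase x) := M.indep_subset hT2 (Finset.erase_subset x T)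
  have h3 : (T.erase x).card ≤ M.rk S := M.le_rk h2 h1
  have h4 : T.card ≤ (T.erase x).card + 1 := by
    rcases em (x ∈ T) with h | h
    · rw [Finset.card_erase_of_mem h]; omega
    · rw [Finset.erase_eq_of_notMem h]; omega
  omega

lemma exists_extension_aux : ∀ (k : ℕ) (S Y : Finset X), M.Indep S → S ⊆ Y →
    M.rk Y - S.card ≤ k → ∃ V, S ⊆ V ∧ V ⊆ Y ∧ M.Indep V ∧ V.card = M.rk Y := by
  intro k
  induction k with
  | zero =>
    intro S Y hS hSY hle
    have h1 : S.card ≤ M.rk Y := M.le_rk hS hSY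
    exact ⟨S, subset_refl S, hSY, hS, by omega⟩
  | succ k ih =>
    intro S Y hS hSY hle
    rcases em (M.rk Y ≤ S.card) with h | h
    · have h1 : S.card ≤ M.rk Y := M.le_rk hS hSY
      exact ⟨S, subset_refl S, hSY, hS, by omega⟩
    · obtain ⟨T, hT1, hT2, hT3⟩ := M.exists_basis Y
      obtain ⟨x, hx1, hx2⟩ := M.indep_exchange hS hT2 (by omega)
      have hxT : x ∈ T := (Finset.mem_sdiff.1 hx1).1
      have hxS : x ∉ S := (Finset.mem_sdiff.1 hx1).2
      have h5 : insert x S ⊆ Y := Finset.insert_subset (hT1 hxT) hSY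
      have h6 : (insert x S).card = S.card + 1 := Finset.card_insert_of_notMem hxS
      obtain ⟨V, hV1, hV2, hV3, hV4⟩ := ih (insert x S) Y hx2 h5 (by omega)
      exact ⟨V, (Finset.subset_insert x S).trans hV1, hV2, hV3, hV4⟩

lemma exists_extension {S Y : Finset X} (hS : M.Indep S) (hSY : S ⊆ Y) :
    ∃ V, S ⊆ V ∧ V ⊆ Y ∧ M.Indep V ∧ V.card = M.rk Y :=
  M.exists_extension_aux (M.rk Y - S.card) S Y hS hSY le_rfl

/-- `x` is spanned by `S`. -/
def Spans (S : Finset X) (x : X) : Prop := M.rk (insert x S) = M.rk S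

lemma spans_of_mem {S : Finset X} {x : X} (h : x ∈ S) : M.Spans S x := by
  unfold Spans; rw [Finset.insert_eq_self.2 h]

lemma indep_insert_iff_not_spans {J : Finset X} {x : X} (hJ : M.Indep J) (hx : x ∉ J) :
    M.Indep (insert x J) ↔ ¬ M.Spans J x := by
  have hcard : (insert x J).card = J.card + 1 := Finset.card_insert_of_notMem hx
  have h1 : M.rk J = J.card := M.rk_of_indep hJ
  have h2 : M.rk (insert x J) ≤ J.card + 1 := by
    have := M.rk_insert_le x J; omega
  have h3 : J.card ≤ M.rk (insert x J) := by
    have := M.rk_le_rk_insert x J; omega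
  constructor
  · intro h hsp
    have := M.rk_of_indep h
    unfold Spans at hsp; omega
  · intro h
    refine M.indep_of_rk_eq_card ?_
    unfold Spans at h; omega

lemma not_spans_of_indep_insert {J : Finset X} {x : X} (hJ : M.Indep J) (hx : x ∉ J)
    (h : M.Indep (insert x J)) : ¬ M.Spans J x :=
  (M.indep_insert_iff_not_spans hJ hx).1 h

lemma spans_mono {S T : Finset X} {x : X} (h : M.Spans S x) (hST : S ⊆ T) : M.Spans T x := by
  rcases em (x ∈ T) with hxT | hxT
  · exact M.spans_of_mem hxT
  by_contra hsp
  have h1 : M.rk T < M.rk (insert x T) := by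
    have := M.rk_le_rk_insert x T
    rcases lt_or_eq_of_le this with h' | h'
    · exact h'
    · exact absurd h'.symm hsp
  have h2 : M.rk (insert x T) ≤ M.rk T + 1 := M.rk_insert_le x T
  -- W : basis of insert x T
  obtain ⟨W, hW1, hW2, hW3⟩ := M.exists_basis (insert x T)
  have hxW : x ∈ W := by
    by_contra hxW
    have : W ⊆ T := fun y hy => by
      rcases Finset.mem_insert.1 (hW1 hy) with h' | h'
      · exact absurd (h' ▸ hy) hxW
      · exact h'
    have := M.le_rk hW2 this
    omega
  -- basis of S extended to basis V of T
  obtain ⟨Bs, hBs1, hBs2, hBs3⟩ := M.exists_basis S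
  obtain ⟨V, hV1, hV2, hV3, hV4⟩ := M.exists_extension hBs2 (hBs1.trans hST)
  have hxBs : ¬ M.Indep (insert x Bs) := by
    intro hind
    have hxBs' : x ∉ Bs := fun hmem => hxT (hST (hBs1 hmem))
    have : (insert x Bs).card ≤ M.rk (insert x S) :=
      M.le_rk hind (Finset.insert_subset_insert x hBs1)
    rw [Finset.card_insert_of_notMem hxBs'] at this
    unfold Spans at h
    omega
  have hxV : ¬ M.Indep (insert x V) := fun hind =>
    hxBs (M.indep_subset hind (Finset.insert_subset_insert x hV1))
  -- exchange V with W
  have hcards : V.card < W.card := by omega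
  obtain ⟨z, hz1, hz2⟩ := M.indep_exchange hV3 hW2 hcards
  have hzW : z ∈ W := (Finset.mem_sdiff.1 hz1).1
  have hzx : z ≠ x := by
    intro h'
    exact hxV (h' ▸ hz2)
  have hzT : z ∈ T := by
    rcases Finset.mem_insert.1 (hW1 hzW) with h' | h'
    · exact absurd h' hzx
    · exact h'
  have : insert z V ⊆ T := Finset.insert_subset hzT hV2
  have := M.le_rk hz2 this
  have : V.card + 1 ≤ M.rk T := by
    have hzV : z ∉ V := (Finset.mem_sdiff.1 hz1).2
    rw [Finset.card_insert_of_notMem hzV] at this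
    omega
  omega

lemma rk_union_eq_of_spans {S T : Finset X} (h : ∀ x ∈ T, M.Spans S x) :
    M.rk (S ∪ T) = M.rk S := by
  classical
  induction T using Finset.induction with
  | empty => rw [Finset.union_empty]
  | @insert y T hy ih =>
    have h1 : M.Spans (S ∪ T) y :=
      M.spans_mono (h y (Finset.mem_insert_self y T)) Finset.subset_union_left
    have h2 : M.rk (S ∪ T) = M.rk S := ih fun x hx => h x (Finset.mem_insert_of_mem hx)
    rw [Finset.union_insert]
    unfold Spans at h1
    omega

/-- transfer of spanning: if every element of `U` is spanned by `S`, then anything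
spanned by `U` is spanned by `S`. -/
lemma spans_trans {S U : Finset X} {x : X} (hUS : ∀ y ∈ U, M.Spans S y)
    (hx : M.Spans U x) : M.Spans S x := by
  have h1 : M.rk (S ∪ U) = M.rk S := M.rk_union_eq_of_spans hUS
  have h2 : M.Spans (S ∪ U) x := M.spans_mono hx Finset.subset_union_right
  have h3 : M.rk (insert x S) ≤ M.rk (insert x (S ∪ U)) :=
    M.rk_mono (Finset.insert_subset_insert x Finset.subset_union_left)
  have h4 := M.rk_le_rk_insert x S
  unfold Spans at h2 ⊢
  omega

/-- Steinitz exchange. -/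
lemma spans_exchange {S : Finset X} {x y : X} (h1 : M.Spans (insert y S) x)
    (h2 : ¬ M.Spans S x) : M.Spans (insert x S) y := by
  have e1 : M.rk (insert x S) = M.rk S + 1 := by
    have := M.rk_le_rk_insert x S
    have := M.rk_insert_le x S
    unfold Spans at h2
    omega
  have e2 : M.rk (insert y (insert x S)) = M.rk (insert x (insert y S)) := by
    rw [Finset.insert_comm]
  have e3 : M.rk (insert x (insert y S)) = M.rk (insert y S) := h1
  have e4 : M.rk (insert y S) ≤ M.rk S + 1 := M.rk_insert_le y S
  have e5 : M.rk (insert x S) ≤ M.rk (insert y (insert x S)) := M.rk_le_rk_insert _ _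
  unfold Spans
  omega


lemma erase_indep {S : Finset X} (h : M.Indep S) (x : X) : M.Indep (S.erase x) :=
  M.indep_subset h (Finset.erase_subset x S)

/-- Serial exchange: performing a batch of single-element exchanges simultaneously
preserves independence, provided the "triangular" condition holds. -/
lemma serial_exchange : ∀ (L : List (X × X)) (I : Finset X), M.Indep I →
    (L.map Prod.fst).Nodup → (L.map Prod.snd).Nodup →
    (∀ p ∈ L, p.1 ∉ I) → (∀ p ∈ L, p.2 ∈ I) →
    (∀ p ∈ L, M.Spans I p.1) →
    (∀ p ∈ L, M.Indep (insert p.1 (I.erase p.2))) →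
    L.Pairwise (fun u v => M.Spans (I.erase v.2) u.1) →
    M.Indep ((I \ L.toFinset.image Prod.snd) ∪ L.toFinset.image Prod.fst) := by
  intro L
  induction L with
  | nil =>
    intro I hI _ _ _ _ _ _ _
    simpa using hI
  | cons u L ih =>
    intro I hI hnf hns hfst hsnd hsp hins hpair
    -- basic facts about the head
    have hpI : u.1 ∉ I := hfst u (List.mem_cons_self)
    have hrI : u.2 ∈ I := hsnd u (List.mem_cons_self)
    have hpr : u.1 ≠ u.2 := fun h => hpI (h ▸ hrI)
    set I₁ := insert u.1 (I.erase u.2) with hI₁def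
    have hI₁ : M.Indep I₁ := hins u (List.mem_cons_self)
    have hperase : u.1 ∉ I.erase u.2 := fun h => hpI (Finset.mem_of_mem_erase h)
    have hnotsp : ¬ M.Spans (I.erase u.2) u.1 :=
      M.not_spans_of_indep_insert (M.erase_indep hI u.2) hperase hI₁
    have hspI : M.Spans I u.1 := hsp u (List.mem_cons_self)
    have hsp_r : M.Spans I₁ u.2 := by
      refine M.spans_exchange ?_ hnotsp
      rwa [Finset.insert_erase hrI]
    have hIcl : ∀ x ∈ I, M.Spans I₁ x := by
      intro x hx
      rcases em (x = u.2) with h | h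
      · exact h ▸ hsp_r
      · exact M.spans_of_mem (Finset.mem_insert_of_mem (Finset.mem_erase.2 ⟨h, hx⟩))
    have htrans : ∀ z, M.Spans I z → M.Spans I₁ z := fun z hz => M.spans_trans hIcl hz
    -- nodup facts
    have hnf' : (L.map Prod.fst).Nodup := by
      rw [List.map_cons, List.nodup_cons] at hnf; exact hnf.2
    have hns' : (L.map Prod.snd).Nodup := by
      rw [List.map_cons, List.nodup_cons] at hns; exact hns.2
    have hfne : ∀ v ∈ L, v.1 ≠ u.1 := by
      intro v hv h
      rw [List.map_cons, List.nodup_cons] at hnf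
      exact hnf.1 (h ▸ List.mem_map_of_mem (f := Prod.fst) hv)
    have hsne : ∀ v ∈ L, v.2 ≠ u.2 := by
      intro v hv h
      rw [List.map_cons, List.nodup_cons] at hns
      exact hns.1 (h ▸ List.mem_map_of_mem (f := Prod.snd) hv)
    have hpair_head : ∀ v ∈ L, M.Spans (I.erase v.2) u.1 :=
      (List.pairwise_cons.1 hpair).1
    have hpair_tail := (List.pairwise_cons.1 hpair).2
    -- tail hypotheses w.r.t. I₁
    have hfst' : ∀ v ∈ L, v.1 ∉ I₁ := by
      intro v hv h
      rcases Finset.mem_insert.1 h with h' | h'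
      · exact hfne v hv h'
      · exact hfst v (List.mem_cons_of_mem u hv) (Finset.mem_of_mem_erase h')
    have hsnd' : ∀ v ∈ L, v.2 ∈ I₁ := by
      intro v hv
      exact Finset.mem_insert_of_mem
        (Finset.mem_erase.2 ⟨hsne v hv, hsnd v (List.mem_cons_of_mem u hv)⟩)
    have hsp' : ∀ v ∈ L, M.Spans I₁ v.1 := fun v hv =>
      htrans v.1 (hsp v (List.mem_cons_of_mem u hv))
    -- the key (ii') step
    have hins' : ∀ v ∈ L, M.Indep (insert v.1 (I₁.erase v.2)) := by
      intro v hv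
      have hvI : v.1 ∉ I := hfst v (List.mem_cons_of_mem u hv)
      have hv2I : v.2 ∈ I := hsnd v (List.mem_cons_of_mem u hv)
      have hv2p : v.2 ≠ u.1 := fun h => hpI (h ▸ hv2I)
      have hv1u2 : v.1 ≠ u.2 := fun h => hvI (h ▸ hrI)
      set J' := (I.erase u.2).erase v.2 with hJ'def
      have hJ'sub : J' ⊆ I.erase v.2 := by
        rw [hJ'def, Finset.erase_right_comm]
        exact Finset.erase_subset _ _
      have hI₁e : I₁.erase v.2 = insert u.1 J' := by
        rw [hI₁def, Finset.erase_insert_of_ne (fun h : u.1 = v.2 => hpI (h ▸ hv2I))]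
      rw [hI₁e]
      by_contra hdep
      have hK : M.Indep (insert v.1 (I.erase v.2)) := hins v (List.mem_cons_of_mem u hv)
      have hJ'indep : M.Indep (insert v.1 J') :=
        M.indep_subset hK (Finset.insert_subset_insert v.1 hJ'sub)
      have hpJ' : u.1 ∉ insert v.1 J' := by
        intro h
        rcases Finset.mem_insert.1 h with h' | h'
        · exact hfne v hv h'.symm
        · exact hpI (Finset.mem_of_mem_erase (Finset.mem_of_mem_erase h'))
      have hcomm : insert v.1 (insert u.1 J') = insert u.1 (insert v.1 J') :=
        Finset.insert_comm v.1 u.1 J'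
      rw [hcomm] at hdep
      have hspan1 : M.Spans (insert v.1 J') u.1 := by
        by_contra h
        exact hdep ((M.indep_insert_iff_not_spans hJ'indep hpJ').2 h)
      have hps : ¬ M.Spans J' u.1 := by
        have h1 : M.Indep (insert u.1 J') :=
          M.indep_subset hI₁ (Finset.insert_subset_insert u.1 (Finset.erase_subset v.2 _))
        have h2 : u.1 ∉ J' := fun h => hpI (Finset.mem_of_mem_erase (Finset.mem_of_mem_erase h))
        exact M.not_spans_of_indep_insert
          (M.indep_subset hJ'indep (Finset.subset_insert v.1 J')) h2 h1
      have hspan2 : M.Spans (insert u.1 J') v.1 := M.spans_exchange hspan1 hps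
      have hspan3 : M.Spans (I.erase v.2) v.1 := by
        refine M.spans_trans (U := insert u.1 J') ?_ hspan2
        intro y hy
        rcases Finset.mem_insert.1 hy with h' | h'
        · exact h' ▸ hpair_head v hv
        · exact M.spans_of_mem (hJ'sub h')
      have : v.1 ∉ I.erase v.2 := fun h => hvI (Finset.mem_of_mem_erase h)
      exact (M.not_spans_of_indep_insert (M.erase_indep hI v.2) this hK) hspan3
    -- tail pairwise w.r.t. I₁
    have hpair' : L.Pairwise (fun a b => M.Spans (I₁.erase b.2) a.1) := by
      refine hpair_tail.imp_of_mem ?_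
      intro a b ha hb hab
      have hb2I : b.2 ∈ I := hsnd b (List.mem_cons_of_mem u hb)
      have hb2u2 : b.2 ≠ u.2 := hsne b hb
      have hb2u1 : b.2 ≠ u.1 := fun h => hpI (h ▸ hb2I)
      set S := (I.erase u.2).erase b.2 with hSdef
      have hS2 : S = (I.erase b.2).erase u.2 := Finset.erase_right_comm
      have hI₁e : I₁.erase b.2 = insert u.1 S := by
        rw [hI₁def, Finset.erase_insert_of_ne (Ne.symm hb2u1)]
      have hsp_u2' : M.Spans (I₁.erase b.2) u.2 := by
        rw [hI₁e]
        refine M.spans_exchange (S := S) (y := u.2) ?_ ?_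
        · have : insert u.2 S = I.erase b.2 := by
            rw [hS2, Finset.insert_erase (Finset.mem_erase.2 ⟨Ne.symm hb2u2, hrI⟩)]
          rw [this]
          exact hpair_head b hb
        · have h1 : u.1 ∉ S := fun h => hpI (Finset.mem_of_mem_erase (Finset.mem_of_mem_erase h))
          have h2 : M.Indep (insert u.1 S) :=
            M.indep_subset hI₁ (Finset.insert_subset_insert u.1 (Finset.erase_subset b.2 _))
          exact M.not_spans_of_indep_insert
            (M.indep_subset (M.erase_indep hI u.2) (Finset.erase_subset b.2 _)) h1 h2
      refine M.spans_trans (U := I.erase b.2) ?_ hab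
      intro y hy
      rcases em (y = u.2) with h | h
      · exact h ▸ hsp_u2'
      · have : y ∈ I₁.erase b.2 := by
          rw [hI₁e]
          refine Finset.mem_insert_of_mem (Finset.mem_erase.2 ⟨Finset.ne_of_mem_erase hy, ?_⟩)
          exact Finset.mem_erase.2 ⟨h, Finset.mem_of_mem_erase hy⟩
        exact M.spans_of_mem this
    have hres := ih I₁ hI₁ hnf' hns' hfst' hsnd' hsp' hins' hpair'
    -- rewrite the resulting set
    have hset : (I₁ \ L.toFinset.image Prod.snd) ∪ L.toFinset.image Prod.fst =
        (I \ (u :: L).toFinset.image Prod.snd) ∪ (u :: L).toFinset.image Prod.fst := by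
      have hu1S : u.1 ∉ L.toFinset.image Prod.snd := by
        intro h
        obtain ⟨v, hv, hve⟩ := Finset.mem_image.1 h
        exact hpI (hve ▸ hsnd v (List.mem_cons_of_mem u (List.mem_toFinset.1 hv)))
      have habs : ∀ S₂ F₂ : Finset X, u.1 ∉ S₂ →
          (insert u.1 (I.erase u.2)) \ S₂ ∪ F₂ = I \ insert u.2 S₂ ∪ insert u.1 F₂ := by
        intro S₂ F₂ hu
        ext a
        have ha : a = u.1 → a ∉ S₂ := fun h => h ▸ hu
        simp only [Finset.mem_union, Finset.mem_sdiff, Finset.mem_insert, Finset.mem_erase,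
          not_or]
        constructor
        · rintro (⟨(rfl | ⟨h1, h2⟩), h3⟩ | h4)
          · exact Or.inr (Or.inl rfl)
          · exact Or.inl ⟨h2, h1, h3⟩
          · exact Or.inr (Or.inr h4)
        · rintro (⟨h1, h2, h3⟩ | (rfl | h4))
          · exact Or.inl ⟨Or.inr ⟨h2, h1⟩, h3⟩
          · exact Or.inl ⟨Or.inl rfl, ha rfl⟩
          · exact Or.inr h4
      rw [List.toFinset_cons, Finset.image_insert, Finset.image_insert, hI₁def]
      exact habs _ _ hu1S
    exact hset ▸ hres


lemma path_of_rtg {α : Type*} {r : α → α → Prop} {a b : α} (h : Relation.ReflTransGen r a b) :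
    ∃ (k : ℕ) (f : ℕ → α), f 0 = a ∧ f k = b ∧ ∀ j < k, r (f j) (f (j + 1)) := by
  induction h with
  | refl => exact ⟨0, fun _ => a, rfl, rfl, by omega⟩
  | @tail u v _ huv ih =>
    obtain ⟨k, f, hf0, hfk, harc⟩ := ih
    refine ⟨k + 1, fun j => if j = k + 1 then v else f j, by simp [hf0], by simp, ?_⟩
    intro j hj
    by_cases hne : j = k
    · subst hne
      simp only [if_neg (by omega : ¬ j = j + 1), if_pos rfl]
      exact hfk ▸ huv
    · have h1 : ¬ j = k + 1 := by omega
      have h2 : ¬ j + 1 = k + 1 := by omega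
      simp only [if_neg h1, if_neg h2]
      exact harc j (by omega)

lemma cover_of_rank_condition {n : ℕ} (Ms : Fin n → FinMatroid X)
    (H : ∀ S : Finset X, S.card ≤ ∑ i, (Ms i).rk S) :
    ∃ Cs : Fin n → Finset X, (∀ i, (Ms i).Indep (Cs i)) ∧ ∀ x : X, ∃ i, x ∈ Cs i := by
  classical
  let V : Finset (Fin n → Finset X) := Finset.univ.filter
    (fun C => (∀ i, (Ms i).Indep (C i)) ∧ ∀ i i', i ≠ i' → ∀ x, x ∈ C i → x ∉ C i')
  have hne : V.Nonempty := by
    refine ⟨fun _ => ∅, ?_⟩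
    simp only [V, Finset.mem_filter, Finset.mem_univ, true_and]
    exact ⟨fun i => (Ms i).empty_indep, fun i i' _ x hx => by simp at hx⟩
  obtain ⟨C, hCV, hCmax⟩ := V.exists_max_image (fun C => ∑ i, (C i).card) hne
  rw [Finset.mem_filter] at hCV
  obtain ⟨-, hCind, hCdisj⟩ := hCV
  by_contra hcov
  push_neg at hcov
  obtain ⟨x0, hx0⟩ : ∃ x0, ∀ i, x0 ∉ C i := hcov C hCind
  set Arc : X → X → Prop := fun y z => ∃ i, y ∉ C i ∧ z ∈ C i ∧
    (Ms i).Indep (insert y ((C i).erase z)) with hArcdef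
  set Sink : X → Prop := fun y => ∃ i, y ∉ C i ∧ (Ms i).Indep (insert y (C i)) with hSinkdef
  by_cases hsink : ∃ y, Relation.ReflTransGen Arc x0 y ∧ Sink y
  · -- a sink is reachable : augment, contradicting maximality
    obtain ⟨y0, hy0r, hy0s⟩ := hsink
    have hPex : ∃ k, ∃ f : ℕ → X, f 0 = x0 ∧ (∀ j < k, Arc (f j) (f (j + 1))) ∧ Sink (f k) := by
      obtain ⟨k, f, hf0, hfk, harc⟩ := path_of_rtg hy0r
      exact ⟨k, f, hf0, harc, hfk ▸ hy0s⟩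
    set k0 := Nat.find hPex with hk0def
    obtain ⟨f, hf0, harc, hfs⟩ := Nat.find_spec hPex
    have hmin : ∀ k' < k0, ¬ ∃ f : ℕ → X, f 0 = x0 ∧ (∀ j < k', Arc (f j) (f (j + 1))) ∧
        Sink (f k') := fun k' h => Nat.find_min hPex h
    have hnosink : ∀ j < k0, ¬ Sink (f j) := by
      intro j hj hs
      exact hmin j hj ⟨f, hf0, fun l hl => harc l (by omega), hs⟩
    have hinjlt : ∀ a b, a < b → b ≤ k0 → f a ≠ f b := by
      intro a b hab hb heq
      have hbk : b < k0 := by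
        rcases Nat.lt_or_ge b k0 with h | h
        · exact h
        · exfalso
          have hbe : b = k0 := by omega
          subst hbe
          exact hnosink a (by omega) (heq ▸ hfs)
      refine hmin (k0 - (b - a)) (by omega)
        ⟨fun j => if j ≤ a then f j else f (j + (b - a)), by simp [hf0], ?_, ?_⟩
      · intro j hj
        rcases Nat.lt_or_ge j a with h1 | h1
        · simp only [if_pos (by omega : j ≤ a), if_pos (by omega : j + 1 ≤ a)]
          exact harc j (by omega)
        · by_cases h2 : j = a
          · simp only [if_pos (le_of_eq h2), if_neg (by omega : ¬ j + 1 ≤ a)]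
            have e : j + 1 + (b - a) = b + 1 := by omega
            have e2 : f j = f b := by rw [h2]; exact heq
            rw [e, e2]
            exact harc b hbk
          · simp only [if_neg (by omega : ¬ j ≤ a), if_neg (by omega : ¬ j + 1 ≤ a)]
            have e : j + 1 + (b - a) = (j + (b - a)) + 1 := by omega
            rw [e]
            exact harc (j + (b - a)) (by omega)
      · have h4 : ¬ (k0 - (b - a) ≤ a) := by omega
        simp only [if_neg h4]
        have e : k0 - (b - a) + (b - a) = k0 := by omega
        rw [e]
        exact hfs
    have hinj : ∀ a, a ≤ k0 → ∀ b, b ≤ k0 → f a = f b → a = b := by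
      intro a ha b hb heq
      rcases Nat.lt_trichotomy a b with h | h | h
      · exact absurd heq (hinjlt a b h hb)
      · exact h
      · exact absurd heq.symm (hinjlt b a h ha)
    have hnoshort : ∀ a b, a + 1 < b → b ≤ k0 → ¬ Arc (f a) (f b) := by
      intro a b h1 h2 hab
      refine hmin (k0 - (b - a - 1)) (by omega)
        ⟨fun j => if j ≤ a then f j else f (j + (b - a - 1)), by simp [hf0], ?_, ?_⟩
      · intro j hj
        rcases Nat.lt_or_ge j a with h3 | h3
        · simp only [if_pos (by omega : j ≤ a), if_pos (by omega : j + 1 ≤ a)]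
          exact harc j (by omega)
        · by_cases h4 : j = a
          · simp only [if_pos (le_of_eq h4), if_neg (by omega : ¬ j + 1 ≤ a)]
            have e : j + 1 + (b - a - 1) = b := by omega
            have e2 : f j = f a := by rw [h4]
            rw [e, e2]
            exact hab
          · simp only [if_neg (by omega : ¬ j ≤ a), if_neg (by omega : ¬ j + 1 ≤ a)]
            have e : j + 1 + (b - a - 1) = (j + (b - a - 1)) + 1 := by omega
            rw [e]
            exact harc (j + (b - a - 1)) (by omega)
      · have h4 : ¬ (k0 - (b - a - 1) ≤ a) := by omega
        simp only [if_neg h4]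
        have e : k0 - (b - a - 1) + (b - a - 1) = k0 := by omega
        rw [e]
        exact hfs
    -- labels of the arcs along the path
    have harcd : ∀ j, j < k0 → ∃ i, f j ∉ C i ∧ f (j + 1) ∈ C i ∧
        (Ms i).Indep (insert (f j) ((C i).erase (f (j + 1)))) := fun j hj => harc j hj
    obtain ⟨m, hm1, hm2⟩ := id hfs
    set lab : ℕ → Fin n := fun j => if h : j < k0 then (harcd j h).choose else m with hlabdef
    have hlab : ∀ j, j < k0 → f j ∉ C (lab j) ∧ f (j + 1) ∈ C (lab j) ∧
        (Ms (lab j)).Indep (insert (f j) ((C (lab j)).erase (f (j + 1)))) := by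
      intro j hj
      simp only [hlabdef, dif_pos hj]
      exact (harcd j hj).choose_spec
    set pos : Fin n → Finset ℕ := fun i => (Finset.range k0).filter (fun j => lab j = i)
      with hposdef
    have hposmem : ∀ i j, j ∈ pos i ↔ (j < k0 ∧ lab j = i) := by
      intro i j
      simp [hposdef]
    set Fi : Fin n → Finset X := fun i => (pos i).image f with hFidef
    set Si : Fin n → Finset X := fun i => (pos i).image (fun j => f (j + 1)) with hSidef
    have hspC : ∀ i j, j < k0 → lab j = i → (Ms i).Spans (C i) (f j) := by
      intro i j hj hlj
      have h1 : f j ∉ C i := hlj ▸ (hlab j hj).1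
      by_contra hsp
      have h2 : (Ms i).Indep (insert (f j) (C i)) :=
        ((Ms i).indep_insert_iff_not_spans (hCind i) h1).2 hsp
      exact hnosink j hj ⟨i, h1, h2⟩
    -- serial exchange in each matroid
    have hSE : ∀ i, (Ms i).Indep ((C i \ Si i) ∪ Fi i) := by
      intro i
      set l : List ℕ := (pos i).sort (· ≤ ·) with hldef
      have hlmem : ∀ j ∈ l, j < k0 ∧ lab j = i := fun j hj =>
        (hposmem i j).1 ((Finset.mem_sort _).1 hj)
      set L : List (X × X) := l.map (fun j => (f j, f (j + 1))) with hLdef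
      have himgf : L.toFinset.image Prod.fst = Fi i := by
        ext x
        simp only [Finset.mem_image, List.mem_toFinset, hLdef, List.mem_map, hFidef]
        constructor
        · rintro ⟨p, ⟨j, hj, rfl⟩, rfl⟩
          exact ⟨j, (Finset.mem_sort _).1 hj, rfl⟩
        · rintro ⟨j, hj, rfl⟩
          exact ⟨(f j, f (j + 1)), ⟨j, (Finset.mem_sort _).2 hj, rfl⟩, rfl⟩
      have himgs : L.toFinset.image Prod.snd = Si i := by
        ext x
        simp only [Finset.mem_image, List.mem_toFinset, hLdef, List.mem_map, hSidef]
        constructor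
        · rintro ⟨p, ⟨j, hj, rfl⟩, rfl⟩
          exact ⟨j, (Finset.mem_sort _).1 hj, rfl⟩
        · rintro ⟨j, hj, rfl⟩
          exact ⟨(f j, f (j + 1)), ⟨j, (Finset.mem_sort _).2 hj, rfl⟩, rfl⟩
      have hnf : (L.map Prod.fst).Nodup := by
        rw [hLdef, List.map_map]
        refine List.Nodup.map_on ?_ (Finset.sort_nodup _ _)
        intro x hx y hy hxy
        have hx' := hlmem x hx
        have hy' := hlmem y hy
        exact hinj x (by omega) y (by omega) hxy
      have hns : (L.map Prod.snd).Nodup := by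
        rw [hLdef, List.map_map]
        refine List.Nodup.map_on ?_ (Finset.sort_nodup _ _)
        intro x hx y hy hxy
        have hx' := hlmem x hx
        have hy' := hlmem y hy
        have := hinj (x + 1) (by omega) (y + 1) (by omega) hxy
        omega
      have hmemL : ∀ p ∈ L, ∃ j, j < k0 ∧ lab j = i ∧ p = (f j, f (j + 1)) := by
        intro p hp
        rw [hLdef] at hp
        obtain ⟨j, hj, rfl⟩ := List.mem_map.1 hp
        exact ⟨j, (hlmem j hj).1, (hlmem j hj).2, rfl⟩
      have hf1 : ∀ p ∈ L, p.1 ∉ C i := by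
        intro p hp
        obtain ⟨j, hj, hlj, rfl⟩ := hmemL p hp
        exact hlj ▸ (hlab j hj).1
      have hf2 : ∀ p ∈ L, p.2 ∈ C i := by
        intro p hp
        obtain ⟨j, hj, hlj, rfl⟩ := hmemL p hp
        exact hlj ▸ (hlab j hj).2.1
      have hsp' : ∀ p ∈ L, (Ms i).Spans (C i) p.1 := by
        intro p hp
        obtain ⟨j, hj, hlj, rfl⟩ := hmemL p hp
        exact hspC i j hj hlj
      have hins : ∀ p ∈ L, (Ms i).Indep (insert p.1 ((C i).erase p.2)) := by
        intro p hp
        obtain ⟨j, hj, hlj, rfl⟩ := hmemL p hp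
        exact hlj ▸ (hlab j hj).2.2
      have hpw : L.Pairwise (fun u v => (Ms i).Spans ((C i).erase v.2) u.1) := by
        rw [hLdef, List.pairwise_map]
        have hsorted : l.Pairwise (· < ·) := by
          rw [hldef]
          exact (Finset.sortedLT_sort _).pairwise
        refine hsorted.imp_of_mem ?_
        intro a b ha hb hab
        obtain ⟨hak, hai⟩ := hlmem a ha
        obtain ⟨hbk, hbi⟩ := hlmem b hb
        by_contra hns'
        have h1 : f a ∉ (C i).erase (f (b + 1)) := fun h =>
          (hai ▸ (hlab a hak).1) (Finset.mem_of_mem_erase h)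
        have h2 : (Ms i).Indep (insert (f a) ((C i).erase (f (b + 1)))) :=
          ((Ms i).indep_insert_iff_not_spans ((Ms i).erase_indep (hCind i) _) h1).2 hns'
        exact hnoshort a (b + 1) (by omega) (by omega)
          ⟨i, hai ▸ (hlab a hak).1, hbi ▸ (hlab b hbk).2.1, h2⟩
      have hres := (Ms i).serial_exchange L (C i) (hCind i) hnf hns hf1 hf2 hsp' hins hpw
      rwa [himgf, himgs] at hres
    have hfk0Fi : ∀ i, f k0 ∉ Fi i := by
      intro i h
      obtain ⟨j, hj, hje⟩ := Finset.mem_image.1 h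
      have h2 := (hposmem i j).1 hj
      have := hinj j (by omega) k0 le_rfl hje
      omega
    have hfk0notin : f k0 ∉ (C m \ Si m) ∪ Fi m := by
      intro h
      rcases Finset.mem_union.1 h with h | h
      · exact hm1 (Finset.mem_sdiff.1 h).1
      · exact hfk0Fi m h
    set C' : Fin n → Finset X := fun i =>
      if i = m then insert (f k0) ((C i \ Si i) ∪ Fi i) else (C i \ Si i) ∪ Fi i with hC'def
    have hC'ind : ∀ i, (Ms i).Indep (C' i) := by
      intro i
      simp only [hC'def]
      by_cases h : i = m
      · subst h
        rw [if_pos rfl]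
        have hcl : ∀ z ∈ (C i \ Si i) ∪ Fi i, (Ms i).Spans (C i) z := by
          intro z hz
          rcases Finset.mem_union.1 hz with h | h
          · exact (Ms i).spans_of_mem (Finset.mem_sdiff.1 h).1
          · obtain ⟨j, hj, rfl⟩ := Finset.mem_image.1 h
            have h2 := (hposmem i j).1 hj
            exact hspC i j h2.1 h2.2
        have hnsp : ¬ (Ms i).Spans (C i) (f k0) :=
          (Ms i).not_spans_of_indep_insert (hCind i) hm1 hm2
        have hnsp2 : ¬ (Ms i).Spans ((C i \ Si i) ∪ Fi i) (f k0) := fun h =>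
          hnsp ((Ms i).spans_trans hcl h)
        exact ((Ms i).indep_insert_iff_not_spans (hSE i) hfk0notin).2 hnsp2
      · rw [if_neg h]
        exact hSE i
    have hSimem : ∀ j, j < k0 → f (j + 1) ∈ Si (lab j) := by
      intro j hj
      exact Finset.mem_image.2 ⟨j, (hposmem _ j).2 ⟨hj, rfl⟩, rfl⟩
    have hkey : ∀ i x, x ∈ C i → x ∉ Si i → ∀ j, j ≤ k0 → x ≠ f j := by
      intro i x hxC hxS j hj hxf
      rcases Nat.eq_zero_or_pos j with rfl | hj0
      · exact hx0 i ((hxf.trans hf0) ▸ hxC)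
      · have hj1 : j - 1 < k0 := by omega
        have hmem : f j ∈ C (lab (j - 1)) := by
          have h2 := (hlab (j - 1) hj1).2.1
          have e : j - 1 + 1 = j := by omega
          rwa [e] at h2
        have heqlab : i = lab (j - 1) := by
          by_contra hne
          exact hCdisj i (lab (j - 1)) hne x hxC (hxf ▸ hmem)
        apply hxS
        rw [heqlab]
        have h3 := hSimem (j - 1) hj1
        have e : j - 1 + 1 = j := by omega
        rw [e] at h3
        exact hxf ▸ h3
    have hmemC' : ∀ i x, x ∈ C' i → (x ∈ C i ∧ x ∉ Si i) ∨
        (∃ j, j < k0 ∧ lab j = i ∧ x = f j) ∨ (i = m ∧ x = f k0) := by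
      intro i x hx
      simp only [hC'def] at hx
      have hun : ∀ hx' : x ∈ (C i \ Si i) ∪ Fi i, (x ∈ C i ∧ x ∉ Si i) ∨
          (∃ j, j < k0 ∧ lab j = i ∧ x = f j) ∨ (i = m ∧ x = f k0) := by
        intro hx'
        rcases Finset.mem_union.1 hx' with h2 | h2
        · exact Or.inl ⟨(Finset.mem_sdiff.1 h2).1, (Finset.mem_sdiff.1 h2).2⟩
        · obtain ⟨j, hj, rfl⟩ := Finset.mem_image.1 h2
          have h3 := (hposmem i j).1 hj
          exact Or.inr (Or.inl ⟨j, h3.1, h3.2, rfl⟩)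
      by_cases h : i = m
      · rw [if_pos h] at hx
        rcases Finset.mem_insert.1 hx with h1 | h1
        · exact Or.inr (Or.inr ⟨h, h1⟩)
        · exact hun h1
      · rw [if_neg h] at hx
        exact hun hx
    have hC'disj : ∀ i i', i ≠ i' → ∀ x, x ∈ C' i → x ∉ C' i' := by
      intro i i' hne x hxi hxi'
      apply hne
      have h1 := hmemC' i x hxi
      have h2 := hmemC' i' x hxi'
      rcases h1 with h1 | ⟨j, hj, hlj, hxf⟩ | ⟨him, hxf⟩
      · rcases h2 with h2 | ⟨j', hj', hlj', hxf'⟩ | ⟨him', hxf'⟩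
        · by_contra hne2
          exact hCdisj i i' hne2 x h1.1 h2.1
        · exact absurd hxf' (hkey i x h1.1 h1.2 j' (by omega))
        · exact absurd hxf' (hkey i x h1.1 h1.2 k0 le_rfl)
      · rcases h2 with h2 | ⟨j', hj', hlj', hxf'⟩ | ⟨him', hxf'⟩
        · exact absurd hxf (hkey i' x h2.1 h2.2 j (by omega))
        · have : j = j' := hinj j (by omega) j' (by omega) (hxf ▸ hxf' ▸ rfl)
          rw [← hlj, ← hlj', this]
        · exfalso
          have : j = k0 := hinj j (by omega) k0 le_rfl (hxf ▸ hxf' ▸ rfl)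
          omega
      · rcases h2 with h2 | ⟨j', hj', hlj', hxf'⟩ | ⟨him', hxf'⟩
        · exact absurd hxf (hkey i' x h2.1 h2.2 k0 le_rfl)
        · exfalso
          have : j' = k0 := hinj j' (by omega) k0 le_rfl (hxf' ▸ hxf ▸ rfl)
          omega
        · rw [him, him']
    -- cardinalities
    have hposinjf : ∀ i, (Fi i).card = (pos i).card := by
      intro i
      refine Finset.card_image_of_injOn ?_
      intro a ha b hb hab
      have h1 := (hposmem i a).1 ha
      have h2 := (hposmem i b).1 hb
      exact hinj a (by omega) b (by omega) hab
    have hposinjs : ∀ i, (Si i).card = (pos i).card := by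
      intro i
      refine Finset.card_image_of_injOn ?_
      intro a ha b hb hab
      have h1 := (hposmem i a).1 ha
      have h2 := (hposmem i b).1 hb
      have := hinj (a + 1) (by omega) (b + 1) (by omega) hab
      omega
    have hSisub : ∀ i, Si i ⊆ C i := by
      intro i x hx
      obtain ⟨j, hj, rfl⟩ := Finset.mem_image.1 hx
      have h2 := (hposmem i j).1 hj
      exact h2.2 ▸ (hlab j h2.1).2.1
    have hFidisjCi : ∀ i, Disjoint (C i \ Si i) (Fi i) := by
      intro i
      rw [Finset.disjoint_right]
      intro x hx hx2
      obtain ⟨j, hj, rfl⟩ := Finset.mem_image.1 hx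
      have h2 := (hposmem i j).1 hj
      exact (h2.2 ▸ (hlab j h2.1).1) (Finset.mem_sdiff.1 hx2).1
    have hcardunion : ∀ i, ((C i \ Si i) ∪ Fi i).card = (C i).card := by
      intro i
      have hle : (Si i).card ≤ (C i).card := Finset.card_le_card (hSisub i)
      rw [Finset.card_union_of_disjoint (hFidisjCi i), Finset.card_sdiff_of_subset (hSisub i),
        hposinjf i, hposinjs i]
      rw [hposinjs i] at hle
      omega
    have hcardC' : ∀ i, (C' i).card = (C i).card + (if i = m then 1 else 0) := by
      intro i
      simp only [hC'def]
      by_cases h : i = m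
      · subst h
        rw [if_pos rfl, if_pos rfl, Finset.card_insert_of_notMem hfk0notin, hcardunion]
      · rw [if_neg h, if_neg h, hcardunion]
        omega
    have hsum : ∑ i, (C' i).card = (∑ i, (C i).card) + 1 := by
      calc ∑ i, (C' i).card = ∑ i, ((C i).card + if i = m then 1 else 0) :=
            Finset.sum_congr rfl fun i _ => hcardC' i
        _ = (∑ i, (C i).card) + ∑ i, (if i = m then 1 else 0) := Finset.sum_add_distrib
        _ = (∑ i, (C i).card) + 1 := by
            rw [Finset.sum_ite_eq' Finset.univ m (fun _ => 1)]
            simp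
    have hC'V : C' ∈ V := by
      simp only [V, Finset.mem_filter, Finset.mem_univ, true_and]
      exact ⟨hC'ind, hC'disj⟩
    have hle := hCmax C' hC'V
    omega
  · -- no sink reachable : contradict the rank condition
    push_neg at hsink
    set R : Finset X := Finset.univ.filter (fun z => Relation.ReflTransGen Arc x0 z) with hRdef
    have hmemR : ∀ z, z ∈ R ↔ Relation.ReflTransGen Arc x0 z := by
      intro z; simp [hRdef]
    have hx0R : x0 ∈ R := (hmemR x0).2 Relation.ReflTransGen.refl
    have hclosed : ∀ y ∈ R, ∀ z, Arc y z → z ∈ R := fun y hy z hz =>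
      (hmemR z).2 (Relation.ReflTransGen.tail ((hmemR y).1 hy) hz)
    have hnos : ∀ y ∈ R, ¬ Sink y := fun y hy => hsink y ((hmemR y).1 hy)
    have key : ∀ (i : Fin n), ∀ x ∈ R, (Ms i).Spans (C i ∩ R) x := by
      intro i x hxR
      by_cases hxC : x ∈ C i
      · exact (Ms i).spans_of_mem (Finset.mem_inter.2 ⟨hxC, hxR⟩)
      · by_contra hsp
        have hint : (Ms i).Indep (C i ∩ R) :=
          (Ms i).indep_subset (hCind i) Finset.inter_subset_left
        have hxCR : x ∉ C i ∩ R := fun h => hxC (Finset.mem_inter.1 h).1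
        have hind : (Ms i).Indep (insert x (C i ∩ R)) :=
          ((Ms i).indep_insert_iff_not_spans hint hxCR).2 hsp
        have hsub : insert x (C i ∩ R) ⊆ insert x (C i) :=
          Finset.insert_subset_insert x Finset.inter_subset_left
        obtain ⟨W, hW1, hW2, hW3, hW4⟩ := (Ms i).exists_extension hind hsub
        have hdep : ¬ (Ms i).Indep (insert x (C i)) := fun h => hnos x hxR ⟨i, hxC, h⟩
        have hrk : (Ms i).rk (insert x (C i)) = (C i).card := by
          have h1 : (Ms i).rk (insert x (C i)) ≤ (insert x (C i)).card :=
            (Ms i).rk_le_card _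
          have h2 : (insert x (C i)).card = (C i).card + 1 :=
            Finset.card_insert_of_notMem hxC
          have h3 : (C i).card ≤ (Ms i).rk (insert x (C i)) :=
            (Ms i).le_rk (hCind i) (Finset.subset_insert x _)
          rcases Nat.lt_or_ge ((Ms i).rk (insert x (C i))) ((C i).card + 1) with h | h
          · omega
          · exfalso
            exact hdep ((Ms i).indep_of_rk_eq_card (by omega))
        have hxW : x ∈ W := hW1 (Finset.mem_insert_self _ _)
        have hnsub : ¬ (C i ⊆ W) := by
          intro hh
          have : insert x (C i) ⊆ W := Finset.insert_subset hxW hh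
          have : W = insert x (C i) := Finset.Subset.antisymm hW2 this
          exact hdep (this ▸ hW3)
        obtain ⟨z, hzC, hzW⟩ := Finset.not_subset.1 hnsub
        have hWeq : W = insert x ((C i).erase z) := by
          refine Finset.eq_of_subset_of_card_le ?_ ?_
          · intro y hy
            rcases Finset.mem_insert.1 (hW2 hy) with h | h
            · exact h ▸ Finset.mem_insert_self _ _
            · refine Finset.mem_insert_of_mem (Finset.mem_erase.2 ⟨?_, h⟩)
              intro hyz
              exact hzW (hyz ▸ hy)
          · have h1 : x ∉ (C i).erase z := fun h => hxC (Finset.mem_of_mem_erase h)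
            rw [Finset.card_insert_of_notMem h1, Finset.card_erase_of_mem hzC, hW4, hrk]
            have := Finset.card_pos.2 ⟨z, hzC⟩
            omega
        have harcxz : Arc x z := ⟨i, hxC, hzC, hWeq ▸ hW3⟩
        have hzR : z ∈ R := hclosed x hxR z harcxz
        exact hzW (hW1 (Finset.mem_insert_of_mem (Finset.mem_inter.2 ⟨hzC, hzR⟩)))
    have hrkR : ∀ i : Fin n, (Ms i).rk R = (C i ∩ R).card := by
      intro i
      have h1 : C i ∩ R ∪ R = R := Finset.union_eq_right.2 Finset.inter_subset_right
      have h2 := (Ms i).rk_union_eq_of_spans (S := C i ∩ R) (T := R) (key i)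
      rw [h1] at h2
      rw [h2]
      exact (Ms i).rk_of_indep ((Ms i).indep_subset (hCind i) Finset.inter_subset_left)
    have hdisj2 : ∀ i ∈ (Finset.univ : Finset (Fin n)), ∀ j ∈ Finset.univ, i ≠ j →
        Disjoint (C i ∩ R) (C j ∩ R) := by
      intro i _ j _ hij
      simp only [Finset.disjoint_left]
      intro a ha ha'
      exact hCdisj i j hij a (Finset.mem_inter.1 ha).1 (Finset.mem_inter.1 ha').1
    have hsumle : ∑ i, (C i ∩ R).card ≤ (R.erase x0).card := by
      rw [← Finset.card_biUnion hdisj2]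
      refine Finset.card_le_card ?_
      intro y hy
      obtain ⟨i, -, hi⟩ := Finset.mem_biUnion.1 hy
      obtain ⟨h1, h2⟩ := Finset.mem_inter.1 hi
      exact Finset.mem_erase.2 ⟨fun h => hx0 i (h ▸ h1), h2⟩
    have hcard : (R.erase x0).card = R.card - 1 := Finset.card_erase_of_mem hx0R
    have hR1 : 1 ≤ R.card := Finset.card_pos.2 ⟨x0, hx0R⟩
    have hHR := H R
    have : ∑ i, (Ms i).rk R = ∑ i, (C i ∩ R).card := Finset.sum_congr rfl fun i _ => hrkR i
    omega


/-- Contraction of a matroid by an independent set. -/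
def contract (I : Finset X) (hI : M.Indep I) : FinMatroid X where
  Indep S := Disjoint S I ∧ M.Indep (S ∪ I)
  empty_indep := ⟨Finset.disjoint_empty_left I, by simpa using hI⟩
  indep_subset A B hB hAB :=
    ⟨Finset.disjoint_of_subset_left hAB hB.1,
      M.indep_subset hB.2 (Finset.union_subset_union_left hAB)⟩
  indep_exchange A B hA hB hcard := by
    have hcA : (A ∪ I).card = A.card + I.card := Finset.card_union_of_disjoint hA.1
    have hcB : (B ∪ I).card = B.card + I.card := Finset.card_union_of_disjoint hB.1
    obtain ⟨x, hx1, hx2⟩ := M.indep_exchange hA.2 hB.2 (by omega)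
    obtain ⟨hx3, hx4⟩ := Finset.mem_sdiff.1 hx1
    have hxI : x ∉ I := fun h => hx4 (Finset.mem_union_right A h)
    have hxB : x ∈ B := by
      rcases Finset.mem_union.1 hx3 with h | h
      · exact h
      · exact absurd h hxI
    have hxA : x ∉ A := fun h => hx4 (Finset.mem_union_left I h)
    refine ⟨x, Finset.mem_sdiff.2 ⟨hxB, hxA⟩,
      Finset.disjoint_insert_left.2 ⟨hxI, hA.1⟩, ?_⟩
    rw [Finset.insert_union]
    exact hx2

/-- The matroid induced on `Y` by a map `g : Y → X`, after contracting an
independent set `A₀` disjoint from the range of `g`. -/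
def induced {Y : Type*} [DecidableEq Y] [Fintype Y] (A₀ : Finset X) (g : Y → X)
    (hA₀ : M.Indep A₀) (hg : ∀ y, g y ∉ A₀) : FinMatroid Y where
  Indep S := Set.InjOn g ↑S ∧ M.Indep (A₀ ∪ S.image g)
  empty_indep := by
    refine ⟨by simp, ?_⟩
    simpa using hA₀
  indep_subset S T hT hST :=
    ⟨hT.1.mono (Finset.coe_subset.2 hST),
      M.indep_subset hT.2 (Finset.union_subset_union_right (Finset.image_subset_image hST))⟩
  indep_exchange S T hS hT hlt := by
    have hdS : Disjoint A₀ (S.image g) := by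
      rw [Finset.disjoint_right]
      intro a ha _
      obtain ⟨y, _, rfl⟩ := Finset.mem_image.1 ha
      exact hg y ‹_›
    have hdT : Disjoint A₀ (T.image g) := by
      rw [Finset.disjoint_right]
      intro a ha _
      obtain ⟨y, _, rfl⟩ := Finset.mem_image.1 ha
      exact hg y ‹_›
    have hcS : (S.image g).card = S.card := Finset.card_image_of_injOn hS.1
    have hcT : (T.image g).card = T.card := Finset.card_image_of_injOn hT.1
    have hc1 : (A₀ ∪ S.image g).card = A₀.card + S.card := by
      rw [Finset.card_union_of_disjoint hdS, hcS]
    have hc2 : (A₀ ∪ T.image g).card = A₀.card + T.card := by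
      rw [Finset.card_union_of_disjoint hdT, hcT]
    obtain ⟨e, he1, he2⟩ := M.indep_exchange hS.2 hT.2 (by omega)
    obtain ⟨he3, he4⟩ := Finset.mem_sdiff.1 he1
    have heA : e ∉ A₀ := fun h => he4 (Finset.mem_union_left _ h)
    have heS : e ∉ S.image g := fun h => he4 (Finset.mem_union_right _ h)
    have heT : e ∈ T.image g := by
      rcases Finset.mem_union.1 he3 with h | h
      · exact absurd h heA
      · exact h
    obtain ⟨y, hyT, rfl⟩ := Finset.mem_image.1 heT
    have hyS : y ∉ S := fun h => heS (Finset.mem_image_of_mem g h)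
    refine ⟨y, Finset.mem_sdiff.2 ⟨hyT, hyS⟩, ?_, ?_⟩
    · intro a ha b hb hab
      rw [Finset.coe_insert, Set.mem_insert_iff] at ha hb
      have hmix : ∀ c, c ∈ (S : Set Y) → g c ≠ g y := by
        intro c hc hce
        exact heS (hce ▸ Finset.mem_image_of_mem g (Finset.mem_coe.1 hc))
      rcases ha with rfl | ha
      · rcases hb with rfl | hb
        · rfl
        · exact absurd hab.symm (hmix b hb)
      · rcases hb with rfl | hb
        · exact absurd hab (hmix a ha)
        · exact hS.1 ha hb hab
    · rw [Finset.image_insert, Finset.union_insert]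
      exact he2


lemma main_disjoint {E : Type*} [DecidableEq E] [Fintype E] (M : FinMatroid E)
    (A B : Finset E) (hA : M.Indep A) (hB : M.Indep B) (hAB : Disjoint A B)
    (n q : ℕ) (As : Fin n → Finset E) (hAs : ∀ i, As i ⊆ A)
    (hcover : ∀ x ∈ A, (Finset.univ.filter fun i => x ∈ As i).card = q) :
    ∃ Bs : Fin n → Finset E, (∀ i, Bs i ⊆ B) ∧
      (∀ x ∈ B, (Finset.univ.filter fun i => x ∈ Bs i).card ≤ q) ∧
      (∀ i, M.Indep (As i ∪ (B \ Bs i))) := by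
  classical
  by_cases hnq : n ≤ q
  · refine ⟨fun _ => B, fun _ => subset_rfl, ?_, ?_⟩
    · intro x _
      calc (Finset.univ.filter fun i => x ∈ B).card ≤ (Finset.univ : Finset (Fin n)).card :=
            Finset.card_filter_le _ _
        _ = n := by rw [Finset.card_univ, Fintype.card_fin]
        _ ≤ q := hnq
    · intro i
      rw [Finset.sdiff_self, Finset.union_empty]
      exact M.indep_subset hA (hAs i)
  push_neg at hnq
  set t := n - q with htdef
  have hgB : ∀ p : {x // x ∈ B} × Fin t, (p.1.1 : E) ∈ B := fun p => p.1.2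
  set g : {x // x ∈ B} × Fin t → E := fun p => p.1.1 with hgdef
  have hgA : ∀ i (p : {x // x ∈ B} × Fin t), g p ∉ As i := fun i p h =>
    (Finset.disjoint_left.1 hAB (hAs i h)) (hgB p)
  set P : Fin n → FinMatroid ({x // x ∈ B} × Fin t) := fun i =>
    M.induced (As i) g (M.indep_subset hA (hAs i)) (hgA i) with hPdef
  have hPindep : ∀ i S, (P i).Indep S ↔ Set.InjOn g ↑S ∧ M.Indep (As i ∪ S.image g) := by
    intro i S
    rw [hPdef]
    exact Iff.rfl
  -- verify the rank condition
  have hrank : ∀ S : Finset ({x // x ∈ B} × Fin t), S.card ≤ ∑ i, (P i).rk S := by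
    intro S
    set T : Finset E := S.image g with hTdef
    have hTB : T ⊆ B := by
      intro x hx
      obtain ⟨p, _, rfl⟩ := Finset.mem_image.1 hx
      exact hgB p
    have hTind : M.Indep T := M.indep_subset hB hTB
    have haST : S.card ≤ t * T.card := by
      have h1 := Finset.card_le_card_of_injOn (s := S) (t := T ×ˢ (Finset.univ : Finset (Fin t)))
        (fun p => (g p, p.2)) ?_ ?_
      · rwa [Finset.card_product, Finset.card_univ, Fintype.card_fin, mul_comm] at h1
      · intro p hp
        exact Finset.mem_product.2 ⟨Finset.mem_image_of_mem g hp, Finset.mem_univ _⟩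
      · intro p _ p' _ h
        have h' : (g p, p.2) = (g p', p'.2) := h
        rw [Prod.ext_iff] at h'
        exact Prod.ext (Subtype.ext h'.1) h'.2
    obtain ⟨V, hV1, hV2, hV3, hV4⟩ := M.exists_extension hTind (Finset.subset_union_left (s₂ := A))
    have hVA : A.card ≤ V.card := by
      rw [hV4]
      exact M.le_rk hA Finset.subset_union_right
    set A' : Finset E := V ∩ A with hA'def
    have hVeq : V = T ∪ A' := by
      ext x
      constructor
      · intro hx
        rcases Finset.mem_union.1 (hV2 hx) with h | h
        · exact Finset.mem_union_left _ h
        · exact Finset.mem_union_right _ (Finset.mem_inter.2 ⟨hx, h⟩)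
      · intro hx
        rcases Finset.mem_union.1 hx with h | h
        · exact hV1 h
        · exact (Finset.mem_inter.1 h).1
    have hAA' : A.card ≤ A'.card + T.card := by
      have h1 : V.card ≤ T.card + A'.card := hVeq ▸ Finset.card_union_le T A'
      omega
    have hper : ∀ i, T.card ≤ (P i).rk S + (As i \ A').card := by
      intro i
      have hAsind : M.Indep (As i) := M.indep_subset hA (hAs i)
      obtain ⟨Vi, hVi1, hVi2, hVi3, hVi4⟩ :=
        M.exists_extension hAsind (Finset.subset_union_left (s₂ := T))
      have hdisjTA : Disjoint T (As i ∩ A') := by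
        refine Finset.disjoint_of_subset_left hTB ?_
        refine Finset.disjoint_of_subset_right ?_ hAB.symm
        exact Finset.inter_subset_left.trans (hAs i)
      have hWind : M.Indep (T ∪ (As i ∩ A')) := by
        refine M.indep_subset hV3 ?_
        rw [hVeq]
        exact Finset.union_subset_union_right Finset.inter_subset_right
      have hWsub : T ∪ (As i ∩ A') ⊆ As i ∪ T :=
        Finset.union_subset Finset.subset_union_right
          (Finset.inter_subset_left.trans Finset.subset_union_left)
      have hVi5 : T.card + (As i ∩ A').card ≤ Vi.card := by
        rw [hVi4, ← Finset.card_union_of_disjoint hdisjTA]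
        exact M.le_rk hWind hWsub
      set W : Finset E := Vi \ As i with hWdef
      have hWT : W ⊆ T := by
        intro x hx
        obtain ⟨h1, h2⟩ := Finset.mem_sdiff.1 hx
        rcases Finset.mem_union.1 (hVi2 h1) with h | h
        · exact absurd h h2
        · exact h
      have hWcard : W.card + (As i).card = Vi.card := Finset.card_sdiff_add_card_eq_card hVi1
      have hWind2 : M.Indep (As i ∪ W) := by
        have h1 : As i ∪ W = Vi := by
          rw [hWdef, Finset.union_sdiff_of_subset hVi1]
        rw [h1]
        exact hVi3
      -- lift W to an independent subset of S in the matroid P i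
      have hWlift : W.card ≤ (P i).rk S := by
        have hWT' : ∀ w ∈ W, ∃ p ∈ S, g p = w := by
          intro w hw
          obtain ⟨p, hp, he⟩ := Finset.mem_image.1 (hTdef ▸ hWT hw)
          exact ⟨p, hp, he⟩
        set U : Finset ({x // x ∈ B} × Fin t) :=
          W.attach.image (fun w => (hWT' w.1 w.2).choose) with hUdef
        have hUS : U ⊆ S := by
          intro p hp
          obtain ⟨w, _, rfl⟩ := Finset.mem_image.1 hp
          exact (hWT' w.1 w.2).choose_spec.1
        have himg : U.image g = W := by
          ext w
          constructor
          · intro hw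
            obtain ⟨p, hp, rfl⟩ := Finset.mem_image.1 hw
            obtain ⟨w', _, rfl⟩ := Finset.mem_image.1 hp
            rw [(hWT' w'.1 w'.2).choose_spec.2]
            exact w'.2
          · intro hw
            refine Finset.mem_image.2 ⟨(hWT' w hw).choose, ?_, (hWT' w hw).choose_spec.2⟩
            exact Finset.mem_image.2 ⟨⟨w, hw⟩, Finset.mem_attach _ _, rfl⟩
        have hUcard : U.card = W.card := by
          refine le_antisymm ?_ ?_
          · calc U.card ≤ W.attach.card := Finset.card_image_le
              _ = W.card := Finset.card_attach
          · calc W.card = (U.image g).card := by rw [himg]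
              _ ≤ U.card := Finset.card_image_le
        have hUinj : Set.InjOn g ↑U := by
          refine Finset.card_image_iff.1 ?_
          rw [himg, hUcard]
        have hUind : (P i).Indep U := by
          rw [hPindep]
          exact ⟨hUinj, by rw [himg]; exact hWind2⟩
        calc W.card = U.card := hUcard.symm
          _ ≤ (P i).rk S := (P i).le_rk hUind hUS
      have hsplit : (As i ∩ A').card + (As i \ A').card = (As i).card :=
        Finset.card_inter_add_card_sdiff _ _
      omega
    -- double counting
    have hsum1 : ∑ i, (As i \ A').card = (A \ A').card * q := by
      have hAeq : ∀ i : Fin n, As i \ A' = (A \ A').filter (· ∈ As i) := by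
        intro i
        ext x
        simp only [Finset.mem_sdiff, Finset.mem_filter]
        constructor
        · intro ⟨h1, h2⟩
          exact ⟨⟨hAs i h1, h2⟩, h1⟩
        · intro ⟨⟨_, h2⟩, h3⟩
          exact ⟨h3, h2⟩
      calc ∑ i, (As i \ A').card = ∑ i, ((A \ A').filter (· ∈ As i)).card :=
            Finset.sum_congr rfl fun i _ => by rw [hAeq i]
        _ = ∑ i, ∑ x ∈ A \ A', if x ∈ As i then 1 else 0 :=
            Finset.sum_congr rfl fun i _ => Finset.card_filter _ _
        _ = ∑ x ∈ A \ A', ∑ (i : Fin n), if x ∈ As i then 1 else 0 := Finset.sum_comm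
        _ = ∑ x ∈ A \ A', q := by
            refine Finset.sum_congr rfl fun x hx => ?_
            rw [← Finset.card_filter]
            exact hcover x (Finset.mem_sdiff.1 hx).1
        _ = (A \ A').card * q := by rw [Finset.sum_const, smul_eq_mul]
    have hsum2 : (A \ A').card ≤ T.card := by
      have h1 : A' ⊆ A := Finset.inter_subset_right
      have h2 : (A \ A').card + A'.card = A.card := Finset.card_sdiff_add_card_eq_card h1
      omega
    have hn : n = q + t := by omega
    have hmain : q * T.card + t * T.card ≤ (∑ i, (P i).rk S) + q * (A \ A').card := by
      have h1 : n * T.card = ∑ (_ : Fin n), T.card := by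
        rw [Finset.sum_const, Finset.card_univ, Fintype.card_fin, smul_eq_mul]
      have h2 : ∑ (_ : Fin n), T.card ≤ ∑ i, ((P i).rk S + (As i \ A').card) :=
        Finset.sum_le_sum fun i _ => hper i
      have h3 : ∑ i, ((P i).rk S + (As i \ A').card)
          = (∑ i, (P i).rk S) + ∑ i, (As i \ A').card := Finset.sum_add_distrib
      calc q * T.card + t * T.card = n * T.card := by rw [← add_mul, ← hn]
        _ = ∑ (_ : Fin n), T.card := h1
        _ ≤ ∑ i, ((P i).rk S + (As i \ A').card) := h2
        _ = (∑ i, (P i).rk S) + ∑ i, (As i \ A').card := h3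
        _ = (∑ i, (P i).rk S) + q * (A \ A').card := by rw [hsum1, mul_comm]
    have h9 : t * T.card ≤ ∑ i, (P i).rk S := by
      have h8 : q * T.card + t * T.card ≤ (∑ i, (P i).rk S) + q * T.card :=
        le_trans hmain (by
          have := Nat.mul_le_mul_left q hsum2
          omega)
      rw [add_comm (q * T.card) (t * T.card)] at h8
      exact le_of_add_le_add_right h8
    exact le_trans haST h9
  obtain ⟨Cs, hCsind, hCscov⟩ := cover_of_rank_condition P hrank
  set K : Fin n → Finset E := fun i => (Cs i).image g with hKdef
  have hKB : ∀ i, K i ⊆ B := by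
    intro i x hx
    obtain ⟨p, _, rfl⟩ := Finset.mem_image.1 hx
    exact hgB p
  refine ⟨fun i => B \ K i, fun i => Finset.sdiff_subset, ?_, ?_⟩
  · intro x hx
    have hKx : t ≤ (Finset.univ.filter fun i => x ∈ K i).card := by
      have hchoice : ∀ j : Fin t, ∃ i, (⟨⟨x, hx⟩, j⟩ : {x // x ∈ B} × Fin t) ∈ Cs i :=
        fun j => hCscov _
      have h1 := Finset.card_le_card_of_injOn (s := (Finset.univ : Finset (Fin t)))
        (t := Finset.univ.filter fun i => x ∈ K i)
        (fun j : Fin t => (hchoice j).choose) ?_ ?_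
      · rwa [Finset.card_univ, Fintype.card_fin] at h1
      · intro j _
        simp only [Finset.coe_filter, Set.mem_setOf_eq, Finset.mem_filter, Finset.mem_univ,
          true_and]
        exact (Finset.mem_image.2 ⟨⟨⟨x, hx⟩, j⟩, (hchoice j).choose_spec, rfl⟩ :
          x ∈ (Cs (hchoice j).choose).image g)
      · intro a _ b _ hab
        have hab' : (hchoice a).choose = (hchoice b).choose := hab
        have h1 := (hchoice a).choose_spec
        have h2 := (hchoice b).choose_spec
        rw [← hab'] at h2
        have hinj := ((hPindep _ _).1 (hCsind (hchoice a).choose)).1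
        have h3 := hinj (Finset.mem_coe.2 h1) (Finset.mem_coe.2 h2) rfl
        exact congrArg Prod.snd h3
    have hfeq : (Finset.univ.filter fun i => x ∈ B \ K i)
        = Finset.univ.filter fun i => x ∉ K i := by
      refine Finset.filter_congr fun i _ => ?_
      simp [hx]
    rw [hfeq, Finset.filter_not, Finset.card_sdiff_of_subset (Finset.filter_subset _ _)]
    have hcu : (Finset.univ : Finset (Fin n)).card = n := by
      rw [Finset.card_univ, Fintype.card_fin]
    omega
  · intro i
    have h2 : B \ (B \ K i) = K i := Finset.sdiff_sdiff_eq_self (hKB i)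
    rw [h2]
    exact ((hPindep _ _).1 (hCsind i)).2

end FinMatroid

open Classical in
/-- **Generalized Rota Exchange** (Lee–Sviridenko–Vondrák).
If `A, B` are independent in a matroid and `A₁, …, Aₙ ⊆ A` are such that each element
of `A` lies in exactly `q` of them (`q` a positive integer), then there are sets
`B₁, …, Bₙ ⊆ B` such that each element of `B` lies in at most `q` of them and
`Aᵢ ∪ (B \ Bᵢ)` is independent for each `i`. -/
theorem generalized_rota_exchange
    {E : Type*} [DecidableEq E] [Fintype E] (M : FinMatroid E)
    (A B : Finset E) (hA : M.Indep A) (hB : M.Indep B)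
    (n : ℕ) (q : ℕ) (hq : 0 < q)
    (As : Fin n → Finset E) (hAs : ∀ i, As i ⊆ A)
    (hcover : ∀ x ∈ A, (Finset.univ.filter fun i => x ∈ As i).card = q) :
    ∃ Bs : Fin n → Finset E,
      (∀ i, Bs i ⊆ B) ∧
      (∀ x ∈ B, (Finset.univ.filter fun i => x ∈ Bs i).card ≤ q) ∧
      (∀ i, M.Indep (As i ∪ (B \ Bs i))) := by
  classical
  have hI : M.Indep (A ∩ B) := M.indep_subset hA Finset.inter_subset_left
  set M' := M.contract (A ∩ B) hI with hM'def
  have hA' : M'.Indep (A \ B) := by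
    constructor
    · rw [Finset.disjoint_left]
      intro x hx hx2
      exact (Finset.mem_sdiff.1 hx).2 (Finset.mem_inter.1 hx2).2
    · rw [Finset.sdiff_union_inter A B]
      exact hA
  have hB' : M'.Indep (B \ A) := by
    constructor
    · rw [Finset.disjoint_left]
      intro x hx hx2
      exact (Finset.mem_sdiff.1 hx).2 (Finset.mem_inter.1 hx2).1
    · rw [Finset.inter_comm, Finset.sdiff_union_inter B A]
      exact hB
  have hdisj : Disjoint (A \ B) (B \ A) := disjoint_sdiff_sdiff
  have hAs' : ∀ i, As i \ B ⊆ A \ B := fun i =>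
    Finset.sdiff_subset_sdiff (hAs i) subset_rfl
  have hcover' : ∀ x ∈ A \ B, (Finset.univ.filter fun i => x ∈ As i \ B).card = q := by
    intro x hx
    obtain ⟨hxA, hxB⟩ := Finset.mem_sdiff.1 hx
    have heq : (Finset.univ.filter fun i => x ∈ As i \ B)
        = Finset.univ.filter fun i => x ∈ As i := by
      refine Finset.filter_congr fun i _ => ?_
      simp [hxB]
    rw [heq]
    exact hcover x hxA
  obtain ⟨Bs', h1, h2, h3⟩ := FinMatroid.main_disjoint M' (A \ B) (B \ A) hA' hB' hdisj
    n q (fun i => As i \ B) hAs' hcover'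
  refine ⟨Bs', fun i => (h1 i).trans Finset.sdiff_subset, ?_, ?_⟩
  · intro x hx
    by_cases hxA : x ∈ A
    · have hnone : ∀ i, x ∉ Bs' i := fun i h => (Finset.mem_sdiff.1 (h1 i h)).2 hxA
      have : (Finset.univ.filter fun i => x ∈ Bs' i) = ∅ :=
        Finset.filter_eq_empty_iff.2 fun {i} _ => hnone i
      rw [this]
      simp [Nat.zero_le, hq.le]
    · exact h2 x (Finset.mem_sdiff.2 ⟨hx, hxA⟩)
  · intro i
    have hM' := h3 i
    refine M.indep_subset hM'.2 ?_
    intro x hx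
    rcases Finset.mem_union.1 hx with hx | hx
    · by_cases hxB : x ∈ B
      · exact Finset.mem_union_right _ (Finset.mem_inter.2 ⟨hAs i hx, hxB⟩)
      · exact Finset.mem_union_left _
          (Finset.mem_union_left _ (Finset.mem_sdiff.2 ⟨hx, hxB⟩))
    · obtain ⟨hxB, hxBs⟩ := Finset.mem_sdiff.1 hx
      by_cases hxA : x ∈ A
      · exact Finset.mem_union_right _ (Finset.mem_inter.2 ⟨hxA, hxB⟩)
      · exact Finset.mem_union_left _ (Finset.mem_union_right _
          (Finset.mem_sdiff.2 ⟨Finset.mem_sdiff.2 ⟨hxB, hxA⟩, hxBs⟩))
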